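/- arXiv:2209.05697 — 4 statements merged into one kernel-verified Lean document; each statement's English description precedes it below -/
import Mathlib

section
/- The octonion norm is multiplicative: for all octonions o₁ and o₂ (realized as pairs of quaternions with the Cayley–Dickson product), |o₁ o₂| = |o₁| |o₂|, where |o|² is the sum of the squares of the eight real coordinates of o. -/
noncomputable section

open Quaternion

/-- The quaternions. -/
abbrev H := Quaternion ℝ

/-- Octonions as pairs of quaternions (Cayley–Dickson construction). -/
abbrev Octonion := H × H

/-- The Cayley–Dickson product: (a,b)(c,d) = (ac − d̄b, da + b c̄). -/
def omul (o₁ o₂ : Octonion) : Octonion :=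
  (o₁.1 * o₂.1 - star o₂.2 * o₁.2, o₂.2 * o₁.1 + o₁.2 * star o₂.1)

/-- τ₄ = (0,1). -/
def tau4 : Octonion := (0, 1)

/-- Embedding of a quaternion a as (a,0). -/
def ofQuat (a : H) : Octonion := (a, 0)

/-- a·τ₄ = (0,a). -/
def qtau (a : H) : Octonion := (0, a)

/-- The octonion norm: |(a,b)|² = |a|² + |b|², the sum of the squares of the
eight real coordinates. -/
def onorm (o : Octonion) : ℝ := Real.sqrt (Quaternion.normSq o.1 + Quaternion.normSq o.2)

lemma normSq_cd (a b c d : H) :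
    Quaternion.normSq (a * c - star d * b) + Quaternion.normSq (d * a + b * star c) =
      (Quaternion.normSq a + Quaternion.normSq b) *
        (Quaternion.normSq c + Quaternion.normSq d) := by
  simp only [Quaternion.normSq_def', Quaternion.re_sub, Quaternion.imI_sub,
    Quaternion.imJ_sub, Quaternion.imK_sub, Quaternion.re_add, Quaternion.imI_add,
    Quaternion.imJ_add, Quaternion.imK_add, Quaternion.re_mul, Quaternion.imI_mul,
    Quaternion.imJ_mul, Quaternion.imK_mul, Quaternion.re_star, Quaternion.imI_star,
    Quaternion.imJ_star, Quaternion.imK_star]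
  ring

/-- The octonion norm is multiplicative: |o₁ o₂| = |o₁| |o₂|. -/
theorem onorm_mul (o₁ o₂ : Octonion) : onorm (omul o₁ o₂) = onorm o₁ * onorm o₂ := by
  unfold onorm omul
  rw [← Real.sqrt_mul (add_nonneg Quaternion.normSq_nonneg Quaternion.normSq_nonneg)]
  congr 1
  exact normSq_cd o₁.1 o₁.2 o₂.1 o₂.2
end
end

section
/- (Reconstruction formula for the 1D Wigner distribution in the LCT domain, complex scalar model.) Let Λ = (a,b,c,d) with ad − bc = 1, b ≠ 0, and let f, g : ℝ → ℂ be Schwartz functions with g(0) ≠ 0. Define W_{f,g}(t,w) = ∫_ℝ f(t + x/2) conj(g(t − x/2)) K_Λ(x,w) dx with kernel K_Λ(x,w) = (2π|b|)^{-1/2} exp(i(a x² − 2 x w + d w² − π/2)/(2b)). Then for all ξ ∈ ℝ, f(ξ) = (1/conj(g(0))) ∫_ℝ W_{f,g}(ξ/2, w) · conj(K_Λ(ξ,w)) dw. -/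
open MeasureTheory Complex
open scoped FourierTransform

noncomputable section

/-- The 1D linear canonical transform kernel
K_Λ(x,w) = (2π|b|)^{-1/2} exp(i(a x² − 2 x w + d w² − π/2)/(2b)). -/
def lctKernel (a b d : ℝ) (x w : ℝ) : ℂ :=
  (Real.sqrt (2 * Real.pi * |b|) : ℂ)⁻¹ *
    Complex.exp (Complex.I *
      (((a * x ^ 2 - 2 * x * w + d * w ^ 2 - Real.pi / 2) / (2 * b) : ℝ) : ℂ))

/-- The 1D Wigner distribution in the LCT domain:
W_{f,g}(t,w) = ∫ f(t+x/2) conj(g(t−x/2)) K_Λ(x,w) dx. -/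
def wignerLCT (a b d : ℝ) (f g : ℝ → ℂ) (t w : ℝ) : ℂ :=
  ∫ x : ℝ, f (t + x / 2) * (starRingEnd ℂ) (g (t - x / 2)) * lctKernel a b d x w

lemma myMulTG {E : Type*} [NormedAddCommGroup E] [NormedSpace ℝ E]
    {f g : E → ℂ} (hf : Function.HasTemperateGrowth f) (hg : Function.HasTemperateGrowth g) :
    Function.HasTemperateGrowth (fun x => f x * g x) := by
  refine ⟨hf.1.mul hg.1, fun n => ?_⟩
  obtain ⟨k₁, C₁, hC₁, h₁⟩ := hf.norm_iteratedFDeriv_le_uniform n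
  obtain ⟨k₂, C₂, hC₂, h₂⟩ := hg.norm_iteratedFDeriv_le_uniform n
  refine ⟨k₁ + k₂, 2 ^ n * (C₁ * C₂), fun x => ?_⟩
  calc ‖iteratedFDeriv ℝ n (fun y => f y * g y) x‖
      ≤ ∑ i ∈ Finset.range (n + 1), (n.choose i : ℝ) * ‖iteratedFDeriv ℝ i f x‖ *
        ‖iteratedFDeriv ℝ (n - i) g x‖ :=
        norm_iteratedFDeriv_mul_le hf.1 hg.1 x (by exact_mod_cast le_top)
    _ ≤ ∑ i ∈ Finset.range (n + 1), (n.choose i : ℝ) * (C₁ * (1 + ‖x‖) ^ k₁) *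
        (C₂ * (1 + ‖x‖) ^ k₂) := by
        apply Finset.sum_le_sum
        intro i hi
        have hin : i ≤ n := Nat.lt_succ_iff.mp (Finset.mem_range.mp hi)
        have ha := h₁ i hin x
        have hb := h₂ (n - i) (Nat.sub_le n i) x
        have hn1 : (0:ℝ) ≤ (n.choose i : ℝ) := by positivity
        gcongr <;> first | positivity | exact ha | exact hb
    _ = (∑ i ∈ Finset.range (n + 1), (n.choose i : ℝ)) * (C₁ * C₂) * (1 + ‖x‖) ^ (k₁ + k₂) := by
        rw [Finset.sum_mul, Finset.sum_mul]
        apply Finset.sum_congr rfl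
        intro i _
        rw [pow_add]
        ring
    _ = 2 ^ n * (C₁ * C₂) * (1 + ‖x‖) ^ (k₁ + k₂) := by
        norm_cast
        rw [Nat.sum_range_choose]
    _ ≤ 2 ^ n * (C₁ * C₂) * (1 + ‖x‖) ^ (k₁ + k₂) := le_rfl

lemma mySchwartzTG (f : SchwartzMap ℝ ℂ) : Function.HasTemperateGrowth ⇑f := by
  refine ⟨f.smooth ⊤, fun n => ⟨0, SchwartzMap.seminorm ℝ 0 n f, fun x => ?_⟩⟩
  simpa using f.le_seminorm ℝ 0 n x

lemma myConjTG (f : SchwartzMap ℝ ℂ) :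
    Function.HasTemperateGrowth (fun x => (starRingEnd ℂ) (f x)) := by
  have hc : (fun x => (starRingEnd ℂ) (f x)) = ⇑Complex.conjLIE ∘ ⇑f := rfl
  refine ⟨?_, fun n => ?_⟩
  · rw [hc]
    exact (Complex.conjLIE.toContinuousLinearEquiv.toContinuousLinearMap.contDiff).comp
      (f.smooth ⊤)
  · refine ⟨0, SchwartzMap.seminorm ℝ 0 n f, fun x => ?_⟩
    rw [hc, Complex.conjLIE.norm_iteratedFDeriv_comp_left f x n]
    simpa using f.le_seminorm ℝ 0 n x

lemma myAffineTG (α β : ℝ) :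
    Function.HasTemperateGrowth (fun x : ℝ => α + β * x) := by
  have hx : ∀ x : ℝ, HasFDerivAt (fun x : ℝ => α + β * x)
      (β • (ContinuousLinearMap.id ℝ ℝ)) x := by
    intro x
    simpa using ((hasFDerivAt_id x).const_mul β).const_add α
  apply Function.HasTemperateGrowth.of_fderiv (k := 1) (C := |α| + |β|)
  · have : (fderiv ℝ (fun x : ℝ => α + β * x)) = fun _ => β • (ContinuousLinearMap.id ℝ ℝ) := by
      funext x
      exact (hx x).fderiv
    rw [this]
    exact .const _
  · exact fun x => (hx x).differentiableAt
  · intro x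
    have h1 : ‖α + β * x‖ ≤ |α| + |β| * ‖x‖ := by
      rw [Real.norm_eq_abs, Real.norm_eq_abs]
      calc |α + β * x| ≤ |α| + |β * x| := abs_add_le _ _
        _ = |α| + |β| * |x| := by rw [abs_mul]
    calc ‖α + β * x‖ ≤ |α| + |β| * ‖x‖ := h1
      _ ≤ (|α| + |β|) * (1 + ‖x‖) ^ 1 := by
          have := norm_nonneg x
          have := abs_nonneg α
          have := abs_nonneg β
          nlinarith

lemma myAffineAL (α β : ℝ) (hβ : β ≠ 0) :
    AntilipschitzWith (‖β⁻¹‖₊) (fun x : ℝ => α + β * x) := by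
  apply AntilipschitzWith.of_le_mul_dist
  intro x y
  rw [Real.dist_eq, Real.dist_eq]
  have : (α + β * x) - (α + β * y) = β * (x - y) := by ring
  rw [this, abs_mul]
  rw [coe_nnnorm, Real.norm_eq_abs, abs_inv]
  rw [← mul_assoc, inv_mul_cancel₀ (abs_ne_zero.mpr hβ), one_mul]

lemma myPolyBound (p : Polynomial ℂ) :
    ∃ (C : ℝ) (k : ℕ), 0 ≤ C ∧ ∀ x : ℝ, ‖p.eval (x : ℂ)‖ ≤ C * (1 + ‖x‖) ^ k := by
  induction p using Polynomial.induction_on' with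
  | add p q hp hq =>
    obtain ⟨C₁, k₁, hC₁, h₁⟩ := hp
    obtain ⟨C₂, k₂, hC₂, h₂⟩ := hq
    refine ⟨C₁ + C₂, max k₁ k₂, by positivity, fun x => ?_⟩
    have hx : (1:ℝ) ≤ 1 + ‖x‖ := by have := norm_nonneg x; linarith
    calc ‖(p + q).eval (x:ℂ)‖ ≤ ‖p.eval (x:ℂ)‖ + ‖q.eval (x:ℂ)‖ := by
          rw [Polynomial.eval_add]; exact norm_add_le _ _
      _ ≤ C₁ * (1 + ‖x‖) ^ k₁ + C₂ * (1 + ‖x‖) ^ k₂ := add_le_add (h₁ x) (h₂ x)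
      _ ≤ C₁ * (1 + ‖x‖) ^ (max k₁ k₂) + C₂ * (1 + ‖x‖) ^ (max k₁ k₂) := by
          gcongr
          · exact le_max_left _ _
          · exact le_max_right _ _
      _ = (C₁ + C₂) * (1 + ‖x‖) ^ (max k₁ k₂) := by ring
  | monomial n c =>
    refine ⟨‖c‖, n, norm_nonneg c, fun x => ?_⟩
    rw [Polynomial.eval_monomial, norm_mul, norm_pow]
    gcongr
    rw [Complex.norm_real]
    have := norm_nonneg x
    linarith

lemma myChirpDeriv (c : ℂ) (n : ℕ) :
    ∃ p : Polynomial ℂ, ∀ x : ℝ,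
      iteratedDeriv n (fun x : ℝ => Complex.exp (c * (x:ℂ)^2)) x
        = p.eval (x:ℂ) * Complex.exp (c * (x:ℂ)^2) := by
  induction n with
  | zero => exact ⟨1, fun x => by simp⟩
  | succ n ih =>
    obtain ⟨p, hp⟩ := ih
    refine ⟨p.derivative + Polynomial.C (2*c) * Polynomial.X * p, fun x => ?_⟩
    rw [iteratedDeriv_succ, funext hp]
    have h1 : HasDerivAt (fun x : ℝ => p.eval (x:ℂ)) (p.derivative.eval (x:ℂ)) x :=
      (p.hasDerivAt (x:ℂ)).comp_ofReal
    have h2 : HasDerivAt (fun x : ℝ => Complex.exp (c * (x:ℂ)^2))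
        (Complex.exp (c * (x:ℂ)^2) * (c * (2*(x:ℂ)))) x := by
      have hz : HasDerivAt (fun z : ℂ => c * z ^ 2) (c * (2 * (x:ℂ))) (x:ℂ) := by
        simpa [mul_comm, mul_assoc] using ((hasDerivAt_pow 2 ((x:ℂ))).const_mul c)
      exact (hz.cexp).comp_ofReal
    rw [(h1.fun_mul h2).deriv]
    simp only [Polynomial.eval_add, Polynomial.eval_mul, Polynomial.eval_C, Polynomial.eval_X]
    ring

lemma myChirpTG (r : ℝ) :
    Function.HasTemperateGrowth (fun x : ℝ => Complex.exp ((Complex.I * (r:ℂ)) * (x:ℂ)^2)) := by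
  refine ⟨?_, fun n => ?_⟩
  · exact Complex.contDiff_exp.comp
      (ContDiff.mul contDiff_const (Complex.ofRealCLM.contDiff.pow 2))
  · obtain ⟨p, hp⟩ := myChirpDeriv (Complex.I * (r:ℂ)) n
    obtain ⟨C, k, hC0, hCk⟩ := myPolyBound p
    refine ⟨k, C, fun x => ?_⟩
    rw [norm_iteratedFDeriv_eq_norm_iteratedDeriv, hp x, norm_mul]
    have hnorm : ‖Complex.exp ((Complex.I * (r:ℂ)) * (x:ℂ)^2)‖ = 1 := by
      have : (Complex.I * (r:ℂ)) * (x:ℂ)^2 = ((r * x^2 : ℝ) : ℂ) * Complex.I := by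
        push_cast; ring
      rw [this, Complex.norm_exp_ofReal_mul_I]
    rw [hnorm, mul_one]
    exact hCk x

def myChirp (r : ℝ) (x : ℝ) : ℂ := Complex.exp ((Complex.I * (r:ℂ)) * (x:ℂ)^2)

def myH (r ξ : ℝ) (f g : SchwartzMap ℝ ℂ) : SchwartzMap ℝ ℂ :=
  SchwartzMap.bilinLeftCLM (ContinuousLinearMap.mul ℝ ℂ)
    (myMulTG
      (myConjTG (SchwartzMap.compCLMOfAntilipschitz ℝ (myAffineTG (ξ/2) (-(1/2)))
        (myAffineAL (ξ/2) (-(1/2)) (by norm_num)) g))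
      (myChirpTG r))
    (SchwartzMap.compCLMOfAntilipschitz ℝ (myAffineTG (ξ/2) (1/2))
      (myAffineAL (ξ/2) (1/2) (by norm_num)) f)

lemma myH_apply (r ξ : ℝ) (f g : SchwartzMap ℝ ℂ) (x : ℝ) :
    myH r ξ f g x
      = f (ξ/2 + (1/2) * x) * ((starRingEnd ℂ) (g (ξ/2 + (-(1/2)) * x)) * myChirp r x) := rfl

lemma step1 (a b d : ℝ) (hb : b ≠ 0) (f g : SchwartzMap ℝ ℂ) (ξ w : ℝ) :
    wignerLCT a b d ⇑f ⇑g (ξ/2) w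
      = (((Real.sqrt (2*Real.pi*|b|) : ℝ) : ℂ)⁻¹ *
          Complex.exp (Complex.I * (((d*w^2 - Real.pi/2)/(2*b) : ℝ) : ℂ))) *
        𝓕 (⇑(myH (a/(2*b)) ξ f g)) (w/(2*Real.pi*b)) := by
  have hπ : (0:ℝ) < Real.pi := Real.pi_pos
  have hb' : (b:ℂ) ≠ 0 := Complex.ofReal_ne_zero.mpr hb
  have hπ' : ((Real.pi:ℝ):ℂ) ≠ 0 := Complex.ofReal_ne_zero.mpr hπ.ne'
  rw [wignerLCT, Real.fourier_real_eq_integral_exp_smul]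
  rw [← MeasureTheory.integral_const_mul]
  congr 1
  funext x
  rw [lctKernel, myH_apply, smul_eq_mul]
  have h1 : ξ/2 + (1/2)*x = ξ/2 + x/2 := by ring
  have h2 : ξ/2 + (-(1/2))*x = ξ/2 - x/2 := by ring
  rw [h1, h2, myChirp]
  have hexp : Complex.exp (Complex.I * (((a*x^2 - 2*x*w + d*w^2 - Real.pi/2)/(2*b) : ℝ):ℂ))
      = Complex.exp (Complex.I * (((d*w^2 - Real.pi/2)/(2*b) : ℝ):ℂ)) *
        (Complex.exp (((-2*Real.pi*x*(w/(2*Real.pi*b)) : ℝ):ℂ) * Complex.I) *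
         Complex.exp ((Complex.I * ((a/(2*b) : ℝ):ℂ)) * (x:ℂ)^2)) := by
    rw [← Complex.exp_add, ← Complex.exp_add]
    have hθ : (a*x^2 - 2*x*w + d*w^2 - Real.pi/2)/(2*b)
        = (d*w^2 - Real.pi/2)/(2*b) + (-2*Real.pi*x*(w/(2*Real.pi*b))) + (a/(2*b))*x^2 := by
      field_simp
      ring
    rw [hθ]
    push_cast
    ring
  rw [hexp]
  ring


/-- Reconstruction formula for the 1D Wigner distribution in the LCT domain:
f(ξ) = (1/conj(g(0))) ∫ W_{f,g}(ξ/2, w) conj(K_Λ(ξ,w)) dw. -/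
theorem wignerLCT_reconstruction (a b c d : ℝ) (hΛ : a * d - b * c = 1) (hb : b ≠ 0)
    (f g : SchwartzMap ℝ ℂ) (hg0 : g 0 ≠ 0) (ξ : ℝ) :
    f ξ = (1 / (starRingEnd ℂ) (g 0)) *
      ∫ w : ℝ, wignerLCT a b d (⇑f) (⇑g) (ξ / 2) w *
        (starRingEnd ℂ) (lctKernel a b d ξ w) := by
  have hπ : (0:ℝ) < Real.pi := Real.pi_pos
  have hb0 : (0:ℝ) < |b| := abs_pos.mpr hb
  have hb' : (b:ℂ) ≠ 0 := Complex.ofReal_ne_zero.mpr hb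
  have hπ' : ((Real.pi : ℝ):ℂ) ≠ 0 := Complex.ofReal_ne_zero.mpr hπ.ne'
  set H : SchwartzMap ℝ ℂ := myH (a/(2*b)) ξ f g with hHdef
  have hHint : Integrable (⇑H) := H.integrable
  have hFint : Integrable (𝓕 ⇑H) := by
    have hcoe : ⇑(SchwartzMap.fourierTransformCLM ℂ H) = 𝓕 ⇑H := by
      rfl
    rw [← hcoe]
    exact SchwartzMap.integrable _
  set Φ : ℝ → ℂ := fun u => Complex.exp (((-2*Real.pi*u*(-ξ) : ℝ) : ℂ) * Complex.I) • 𝓕 (⇑H) u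
    with hΦdef
  -- step 2 : pointwise identity in w
  have step2 : ∀ w : ℝ, wignerLCT a b d ⇑f ⇑g (ξ/2) w * (starRingEnd ℂ) (lctKernel a b d ξ w)
      = ((((Real.sqrt (2*Real.pi*|b|) : ℝ) : ℂ)⁻¹)^2 *
          Complex.exp (-(Complex.I * ((a*ξ^2/(2*b) : ℝ) : ℂ)))) * Φ ((2*Real.pi*b)⁻¹ * w) := by
    intro w
    rw [step1 a b d hb f g ξ w, lctKernel]
    have harg : w/(2*Real.pi*b) = (2*Real.pi*b)⁻¹ * w := by ring
    rw [harg]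
    simp only [hΦdef, smul_eq_mul]
    have hconj : (starRingEnd ℂ) (((Real.sqrt (2*Real.pi*|b|) : ℝ) : ℂ)⁻¹ *
        Complex.exp (Complex.I *
          (((a * ξ ^ 2 - 2 * ξ * w + d * w ^ 2 - Real.pi / 2) / (2 * b) : ℝ) : ℂ)))
        = ((Real.sqrt (2*Real.pi*|b|) : ℝ) : ℂ)⁻¹ *
          Complex.exp (-(Complex.I *
            (((a * ξ ^ 2 - 2 * ξ * w + d * w ^ 2 - Real.pi / 2) / (2 * b) : ℝ) : ℂ))) := by
      rw [map_mul, map_inv₀, Complex.conj_ofReal, ← Complex.exp_conj]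
      congr 1
      simp [map_mul, Complex.conj_ofReal, map_ofNat]
    rw [hconj]
    have hexp : Complex.exp (Complex.I * (((d*w^2 - Real.pi/2)/(2*b) : ℝ) : ℂ)) *
        Complex.exp (-(Complex.I *
          (((a * ξ ^ 2 - 2 * ξ * w + d * w ^ 2 - Real.pi / 2) / (2 * b) : ℝ) : ℂ)))
        = Complex.exp (-(Complex.I * ((a*ξ^2/(2*b) : ℝ) : ℂ))) *
          Complex.exp (((-2*Real.pi*((2*Real.pi*b)⁻¹ * w)*(-ξ) : ℝ) : ℂ) * Complex.I) := by
      rw [← Complex.exp_add, ← Complex.exp_add]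
      congr 1
      push_cast
      field_simp
      ring
    calc (((Real.sqrt (2*Real.pi*|b|) : ℝ) : ℂ)⁻¹ *
          Complex.exp (Complex.I * (((d*w^2 - Real.pi/2)/(2*b) : ℝ) : ℂ))) *
          𝓕 (⇑H) ((2*Real.pi*b)⁻¹ * w) *
          (((Real.sqrt (2*Real.pi*|b|) : ℝ) : ℂ)⁻¹ *
          Complex.exp (-(Complex.I *
            (((a * ξ ^ 2 - 2 * ξ * w + d * w ^ 2 - Real.pi / 2) / (2 * b) : ℝ) : ℂ))))
        = ((((Real.sqrt (2*Real.pi*|b|) : ℝ) : ℂ)⁻¹)^2 *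
            (Complex.exp (Complex.I * (((d*w^2 - Real.pi/2)/(2*b) : ℝ) : ℂ)) *
             Complex.exp (-(Complex.I *
              (((a * ξ ^ 2 - 2 * ξ * w + d * w ^ 2 - Real.pi / 2) / (2 * b) : ℝ) : ℂ))))) *
            𝓕 (⇑H) ((2*Real.pi*b)⁻¹ * w) := by ring
      _ = _ := by rw [hexp]; ring
  have hint2 : ∫ w : ℝ, Φ ((2*Real.pi*b)⁻¹ * w) = |2*Real.pi*b| • ∫ u, Φ u := by
    rw [Measure.integral_comp_mul_left Φ ((2*Real.pi*b)⁻¹), inv_inv]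
  have hΦint : ∫ u, Φ u = H ξ := by
    have h1 : ∫ u, Φ u = 𝓕 (𝓕 ⇑H) (-ξ) := by
      rw [Real.fourier_real_eq_integral_exp_smul]
    have h2 : 𝓕 (𝓕 ⇑H) (-ξ) = 𝓕⁻ (𝓕 ⇑H) ξ :=
      (Real.fourierInv_eq_fourier_neg (𝓕 ⇑H) ξ).symm
    rw [h1, h2]
    exact hHint.fourierInv_fourier_eq hFint H.continuous.continuousAt
  have hInt : (∫ w : ℝ, wignerLCT a b d ⇑f ⇑g (ξ/2) w * (starRingEnd ℂ) (lctKernel a b d ξ w))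
      = ((((Real.sqrt (2*Real.pi*|b|) : ℝ):ℂ)⁻¹)^2 *
          Complex.exp (-(Complex.I * ((a*ξ^2/(2*b) : ℝ):ℂ)))) *
        ((|2*Real.pi*b| : ℝ) • H ξ) := by
    simp only [step2]
    rw [MeasureTheory.integral_const_mul, hint2, hΦint]
  have hu0 : ξ/2 + (1/2)*ξ = ξ := by ring
  have hv0 : ξ/2 + (-(1/2))*ξ = (0:ℝ) := by ring
  have hHξ : H ξ = f ξ * ((starRingEnd ℂ) (g 0) * myChirp (a/(2*b)) ξ) := by
    rw [hHdef, myH_apply, hu0, hv0]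
  have e1 : Complex.exp (-(Complex.I * ((a*ξ^2/(2*b) : ℝ):ℂ))) * myChirp (a/(2*b)) ξ = 1 := by
    rw [myChirp, ← Complex.exp_add]
    have hz : (-(Complex.I * ((a*ξ^2/(2*b) : ℝ):ℂ))) +
        (Complex.I * ((a/(2*b) : ℝ):ℂ)) * (ξ:ℂ)^2 = 0 := by
      push_cast
      field_simp
      ring
    rw [hz, Complex.exp_zero]
  have e2 : ((((Real.sqrt (2*Real.pi*|b|) : ℝ):ℂ)⁻¹)^2) * ((|2*Real.pi*b| : ℝ) : ℂ) = 1 := by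
    have hsabs : |2*Real.pi*b| = 2*Real.pi*|b| := by
      rw [abs_mul, abs_of_pos (by positivity : (0:ℝ) < 2*Real.pi)]
    have hsq : Real.sqrt (2*Real.pi*|b|) * Real.sqrt (2*Real.pi*|b|) = 2*Real.pi*|b| :=
      Real.mul_self_sqrt (by positivity)
    rw [hsabs, sq, ← mul_inv, ← Complex.ofReal_mul, hsq]
    rw [inv_mul_cancel₀]
    exact Complex.ofReal_ne_zero.mpr (by positivity)
  have e3 : (1 / (starRingEnd ℂ) (g 0)) * (starRingEnd ℂ) (g 0) = 1 := by
    have : (starRingEnd ℂ) (g 0) ≠ 0 := by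
      simpa using hg0
    field_simp
  rw [hInt, hHξ, Complex.real_smul]
  have hfinal : (1 / (starRingEnd ℂ) (g 0)) *
      (((((Real.sqrt (2*Real.pi*|b|) : ℝ):ℂ)⁻¹)^2 *
          Complex.exp (-(Complex.I * ((a*ξ^2/(2*b) : ℝ):ℂ)))) *
        (((|2*Real.pi*b| : ℝ):ℂ) * (f ξ * ((starRingEnd ℂ) (g 0) * myChirp (a/(2*b)) ξ))))
      = (((1 / (starRingEnd ℂ) (g 0)) * (starRingEnd ℂ) (g 0)) *
          (((((Real.sqrt (2*Real.pi*|b|) : ℝ):ℂ)⁻¹)^2) * ((|2*Real.pi*b| : ℝ):ℂ))) *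
        ((Complex.exp (-(Complex.I * ((a*ξ^2/(2*b) : ℝ):ℂ))) * myChirp (a/(2*b)) ξ) * f ξ) := by
    ring
  rw [hfinal, e3, e2, e1, one_mul, one_mul, one_mul]
end
end

section
/- (Norm estimate for the correlation product used in the Hausdorff–Young inequality for the Wigner distribution.) Let 1 ≤ p ≤ 2 and q with 1/p + 1/q = 1, and let f, g ∈ L²(ℝ, ℂ). Then ∫_ℝ ( ∫_ℝ |f(t + x/2) conj(g(t − x/2))|^p dx )^{q/p} dt ≤ E · (‖f‖₂ ‖g‖₂)^q for some constant E > 0 independent of f and g. -/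
open MeasureTheory Complex
open scoped ENNReal NNReal

lemma lintegral_affine (φ : ℝ → ℝ≥0∞) (hφ : Measurable φ) {a : ℝ} (ha : a ≠ 0) (b : ℝ) :
    ∫⁻ x : ℝ, φ (a * x + b) = ENNReal.ofReal |a⁻¹| * ∫⁻ x : ℝ, φ x := by
  calc ∫⁻ x : ℝ, φ (a * x + b)
      = ∫⁻ y, φ (y + b) ∂(Measure.map (a * ·) volume) :=
        (lintegral_map (hφ.comp (measurable_add_const b)) (measurable_const_mul a)).symm
    _ = ENNReal.ofReal |a⁻¹| * ∫⁻ y : ℝ, φ (y + b) := by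
        rw [Real.map_volume_mul_left ha, lintegral_smul_measure, smul_eq_mul]
    _ = ENNReal.ofReal |a⁻¹| * ∫⁻ x : ℝ, φ x := by
        rw [lintegral_add_right_eq_self (fun y => φ y) b]

lemma key_bound {p q : ℝ} (hp1 : 1 < p) (hp2 : p ≤ 2) (hq : q = p / (p - 1))
    (A B : ℝ → ℝ≥0∞) (hA : Measurable A) (hB : Measurable B) :
    ∫⁻ t : ℝ, (∫⁻ x : ℝ, A (t + x / 2) * B (t - x / 2)) ^ (q / p)
      ≤ (2 : ℝ≥0∞) ^ (q / p) *
        ((∫⁻ u : ℝ, A u ^ (2 / p)) * (∫⁻ v : ℝ, B v ^ (2 / p))) ^ (q / 2) := by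
  have hp0 : 0 < p := lt_trans one_pos hp1
  have hpm1 : 0 < p - 1 := by linarith
  have hq0 : 0 < q := by rw [hq]; positivity
  have hpq' : p / q = p - 1 := by rw [hq]; field_simp
  have hs : 0 < q / p := by positivity
  have hc : 0 ≤ 1 - p / 2 := by linarith
  have hApow : Measurable fun u => A u ^ (2 / p) :=
    ENNReal.continuous_rpow_const.measurable.comp hA
  have hBpow : Measurable fun u => B u ^ (2 / p) :=
    ENNReal.continuous_rpow_const.measurable.comp hB
  set LA := ∫⁻ u : ℝ, A u ^ (2 / p) with hLA
  set LB := ∫⁻ v : ℝ, B v ^ (2 / p) with hLB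
  -- pointwise splitting identity
  have hpoint : ∀ X Y : ℝ≥0∞,
      (X ^ (2/p) * Y ^ (2/p)) ^ (p/q) * ((X ^ (2/p)) ^ (1 - p/2) * (Y ^ (2/p)) ^ (1 - p/2))
        = X * Y := by
    intro X Y
    have ha : (0:ℝ) ≤ 2/p * (p/q) := by
      apply mul_nonneg (by positivity); rw [hpq']; linarith
    have hb : (0:ℝ) ≤ 2/p * (1 - p/2) := mul_nonneg (by positivity) hc
    have hab : 2/p * (p/q) + 2/p * (1 - p/2) = 1 := by
      rw [hpq']; field_simp; ring
    rw [ENNReal.mul_rpow_of_nonneg _ _ (by rw [hpq']; linarith : (0:ℝ) ≤ p/q),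
      ← ENNReal.rpow_mul, ← ENNReal.rpow_mul, ← ENNReal.rpow_mul, ← ENNReal.rpow_mul]
    have hre : ∀ P Q R S : ℝ≥0∞, P * Q * (R * S) = P * R * (Q * S) := fun P Q R S => by ring
    rw [hre, ← ENNReal.rpow_add_of_nonneg _ _ ha hb, ← ENNReal.rpow_add_of_nonneg _ _ ha hb,
      hab, ENNReal.rpow_one, ENNReal.rpow_one]
  -- the reflected B-integral
  have hBrefl : ∀ t : ℝ, ∫⁻ u : ℝ, B (2*t - u) ^ (2/p) = LB := by
    intro t
    have h1 : (fun u : ℝ => B (2*t - u) ^ (2/p))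
        = fun u : ℝ => (fun v : ℝ => B v ^ (2/p)) ((-1) * u + 2*t) := by
      funext u; simp only []; congr 2; ring
    rw [h1, lintegral_affine _ hBpow (by norm_num) (2*t)]
    norm_num
    rfl
  -- Hölder step
  have holder : ∀ t : ℝ, (∫⁻ u : ℝ, A u * B (2*t - u))
      ≤ (∫⁻ u : ℝ, A u ^ (2/p) * B (2*t - u) ^ (2/p)) ^ (p/q) * (LA ^ (1 - p/2) * LB ^ (1 - p/2)) := by
    intro t
    have hB2 : Measurable fun u : ℝ => B (2*t - u) :=
      hB.comp (measurable_const.sub measurable_id)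
    have hB2pow : Measurable fun u : ℝ => B (2*t - u) ^ (2/p) :=
      ENNReal.continuous_rpow_const.measurable.comp hB2
    have hmeas : ∀ i ∈ (Finset.univ : Finset (Fin 3)),
        AEMeasurable ((![fun u : ℝ => A u ^ (2/p) * B (2*t-u) ^ (2/p),
          fun u : ℝ => A u ^ (2/p), fun u : ℝ => B (2*t-u) ^ (2/p)]) i) volume := by
      intro i _
      fin_cases i
      · exact (hApow.mul hB2pow).aemeasurable
      · exact hApow.aemeasurable
      · exact hB2pow.aemeasurable
    have hsum : ∑ i : Fin 3, (![p/q, 1 - p/2, 1 - p/2]) i = 1 := by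
      simp [Fin.sum_univ_three]
      rw [hpq']; ring
    have hnn : ∀ i ∈ (Finset.univ : Finset (Fin 3)), 0 ≤ (![p/q, 1 - p/2, 1 - p/2]) i := by
      intro i _
      fin_cases i
      · simpa using by rw [hpq']; linarith
      · simpa using hc
      · simpa using hc
    have := ENNReal.lintegral_prod_norm_pow_le (μ := (volume : Measure ℝ))
      Finset.univ hmeas hsum hnn
    simp only [Fin.prod_univ_three, Matrix.cons_val_zero, Matrix.cons_val_one,
      Matrix.head_cons, Matrix.cons_val_two, Matrix.tail_cons] at this
    calc ∫⁻ u : ℝ, A u * B (2*t - u)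
        = ∫⁻ u : ℝ, (A u ^ (2/p) * B (2*t-u) ^ (2/p)) ^ (p/q) *
            ((A u ^ (2/p)) ^ (1 - p/2) * (B (2*t-u) ^ (2/p)) ^ (1 - p/2)) :=
          lintegral_congr fun u => (hpoint _ _).symm
      _ ≤ (∫⁻ u : ℝ, A u ^ (2/p) * B (2*t-u) ^ (2/p)) ^ (p/q) *
            ((∫⁻ u : ℝ, A u ^ (2/p)) ^ (1 - p/2) * (∫⁻ u : ℝ, B (2*t-u) ^ (2/p)) ^ (1 - p/2)) := by
          calc _ = ∫⁻ u : ℝ, (A u ^ (2/p) * B (2*t-u) ^ (2/p)) ^ (p/q) *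
              (A u ^ (2/p)) ^ (1 - p/2) * (B (2*t-u) ^ (2/p)) ^ (1 - p/2) :=
                lintegral_congr fun u => by ring
            _ ≤ _ := by
                refine le_trans this (le_of_eq ?_)
                ring
      _ = _ := by rw [hBrefl t]

  -- rewrite the inner integral by substitution x = 2y, y = u - t
  have inner_eq : ∀ t : ℝ, (∫⁻ x : ℝ, A (t + x / 2) * B (t - x / 2))
      = 2 * ∫⁻ u : ℝ, A u * B (2*t - u) := by
    intro t
    have hm1 : Measurable fun y : ℝ => A (t + y) * B (t - y) :=
      (hA.comp (measurable_const.add measurable_id)).mul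
        (hB.comp (measurable_const.sub measurable_id))
    have hm2 : Measurable fun u : ℝ => A u * B (2*t - u) :=
      hA.mul (hB.comp (measurable_const.sub measurable_id))
    have h1 : (fun x : ℝ => A (t + x / 2) * B (t - x / 2))
        = fun x : ℝ => (fun y : ℝ => A (t + y) * B (t - y)) ((2:ℝ)⁻¹ * x + 0) := by
      funext x; simp only []; congr 2 <;> ring
    have h2 : (fun y : ℝ => A (t + y) * B (t - y))
        = fun y : ℝ => (fun u : ℝ => A u * B (2*t - u)) ((1:ℝ) * y + t) := by
      funext y; simp only []; congr 2 <;> ring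
    rw [h1, lintegral_affine _ hm1 (by norm_num : ((2:ℝ)⁻¹) ≠ 0) 0]
    rw [h2, lintegral_affine _ hm2 one_ne_zero t]
    norm_num [ENNReal.ofReal_ofNat]
  -- Tonelli bound
  have hKm : Measurable fun t : ℝ => ∫⁻ u : ℝ, A u ^ (2/p) * B (2*t - u) ^ (2/p) := by
    apply Measurable.lintegral_prod_right'
      (f := Function.uncurry fun t u => A u ^ (2/p) * B (2*t - u) ^ (2/p))
    apply Measurable.mul
    · exact hApow.comp measurable_snd
    · exact (ENNReal.continuous_rpow_const.measurable.comp hB).comp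
        ((measurable_fst.const_mul 2).sub measurable_snd)
  have swap : (∫⁻ t : ℝ, ∫⁻ u : ℝ, A u ^ (2/p) * B (2*t - u) ^ (2/p)) ≤ LA * LB := by
    have hFm : AEMeasurable (fun z : ℝ × ℝ => A z.2 ^ (2/p) * B (2*z.1 - z.2) ^ (2/p))
        (volume.prod volume) := by
      apply Measurable.aemeasurable
      exact (hApow.comp measurable_snd).mul
        ((ENNReal.continuous_rpow_const.measurable.comp hB).comp
          ((measurable_fst.const_mul 2).sub measurable_snd))
    rw [lintegral_lintegral_swap hFm]
    have h2 : ∀ u : ℝ, (∫⁻ t : ℝ, B (2*t - u) ^ (2/p)) ≤ LB := by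
      intro u
      have h3 : (fun t : ℝ => B (2*t - u) ^ (2/p))
          = fun t : ℝ => (fun v : ℝ => B v ^ (2/p)) ((2:ℝ) * t + (-u)) := by
        funext t; simp only []; congr 2 <;> ring
      rw [h3, lintegral_affine _ hBpow (by norm_num : (2:ℝ) ≠ 0) (-u)]
      calc ENNReal.ofReal |(2:ℝ)⁻¹| * LB ≤ 1 * LB := by
            apply mul_le_mul_left
            rw [ENNReal.ofReal_le_one, _root_.abs_of_nonneg (by positivity : (0:ℝ) ≤ (2:ℝ)⁻¹)]
            norm_num
        _ = LB := one_mul LB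
    calc ∫⁻ u : ℝ, ∫⁻ t : ℝ, A u ^ (2/p) * B (2*t - u) ^ (2/p)
        = ∫⁻ u : ℝ, A u ^ (2/p) * ∫⁻ t : ℝ, B (2*t - u) ^ (2/p) := by
          apply lintegral_congr; intro u
          exact lintegral_const_mul _
            ((ENNReal.continuous_rpow_const.measurable.comp hB).comp
              ((measurable_id.const_mul 2).sub measurable_const))
      _ ≤ ∫⁻ u : ℝ, A u ^ (2/p) * LB := lintegral_mono fun u => mul_le_mul_right (h2 u) _
      _ = LA * LB := lintegral_mul_const _ hApow
  -- pointwise bound after raising to power q/p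
  have step : ∀ t : ℝ, (∫⁻ u : ℝ, A u * B (2*t - u)) ^ (q/p)
      ≤ (∫⁻ u : ℝ, A u ^ (2/p) * B (2*t - u) ^ (2/p)) *
          (LA * LB) ^ ((1 - p/2) * (q/p)) := by
    intro t
    have h1 := ENNReal.rpow_le_rpow (holder t) hs.le
    refine le_trans h1 (le_of_eq ?_)
    rw [ENNReal.mul_rpow_of_nonneg _ _ hs.le, ← ENNReal.rpow_mul,
      div_mul_div_comm, mul_comm p q, div_self (by positivity : q * p ≠ 0),
      ENNReal.rpow_one, ← ENNReal.mul_rpow_of_nonneg _ _ hc,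
      ← ENNReal.rpow_mul]
  -- final exponent identity
  have hexp : 1 + (1 - p/2) * (q/p) = q/2 := by
    rw [hq]; field_simp; ring
  calc ∫⁻ t : ℝ, (∫⁻ x : ℝ, A (t + x / 2) * B (t - x / 2)) ^ (q / p)
      = ∫⁻ t : ℝ, (2:ℝ≥0∞) ^ (q/p) * (∫⁻ u : ℝ, A u * B (2*t - u)) ^ (q/p) :=
        lintegral_congr fun t => by
          rw [inner_eq t, ENNReal.mul_rpow_of_nonneg _ _ hs.le]
    _ = (2:ℝ≥0∞) ^ (q/p) * ∫⁻ t : ℝ, (∫⁻ u : ℝ, A u * B (2*t - u)) ^ (q/p) := by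
        apply lintegral_const_mul
        exact ENNReal.continuous_rpow_const.measurable.comp
          (Measurable.lintegral_prod_right'
            (f := Function.uncurry fun t u => A u * B (2*t - u))
            ((hA.comp measurable_snd).mul
              (hB.comp ((measurable_fst.const_mul 2).sub measurable_snd))))
    _ ≤ (2:ℝ≥0∞) ^ (q/p) * ∫⁻ t : ℝ, (∫⁻ u : ℝ, A u ^ (2/p) * B (2*t - u) ^ (2/p)) *
          (LA * LB) ^ ((1 - p/2) * (q/p)) :=
        mul_le_mul_right (lintegral_mono fun t => step t) _
    _ = (2:ℝ≥0∞) ^ (q/p) * ((∫⁻ t : ℝ, ∫⁻ u : ℝ, A u ^ (2/p) * B (2*t - u) ^ (2/p)) *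
          (LA * LB) ^ ((1 - p/2) * (q/p))) := by
        rw [lintegral_mul_const _ hKm]
    _ ≤ (2:ℝ≥0∞) ^ (q/p) * ((LA * LB) * (LA * LB) ^ ((1 - p/2) * (q/p))) :=
        mul_le_mul_right (mul_le_mul_left swap _) _
    _ = (2:ℝ≥0∞) ^ (q/p) * (LA * LB) ^ (q/2) := by
        rw [← hexp, ENNReal.rpow_add_of_nonneg _ _ zero_le_one
          (mul_nonneg hc hs.le), ENNReal.rpow_one]
lemma map_affine_ac {a : ℝ} (ha : a ≠ 0) (b : ℝ) :
    (volume : Measure ℝ).map (fun x => a * x + b) ≪ volume := by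
  have h : (fun x : ℝ => a * x + b) = (fun y : ℝ => y + b) ∘ (fun x : ℝ => a * x) := rfl
  rw [h, ← Measure.map_map (measurable_add_const b) (measurable_const_mul a),
    Real.map_volume_mul_left ha, Measure.map_smul, map_add_right_eq_self volume b]
  exact Measure.AbsolutelyContinuous.mk fun s _ hs => by simp [hs]

lemma ae_eq_comp_affine {δ : Type*} {a : ℝ} (ha : a ≠ 0) (b : ℝ) {g g' : ℝ → δ}
    (h : g =ᵐ[volume] g') :
    (fun x => g (a * x + b)) =ᵐ[volume] (fun x => g' (a * x + b)) := by
  have := ae_eq_comp' (μ := volume) (ν := volume)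
    ((measurable_const_mul a).add_const b).aemeasurable h (map_affine_ac ha b)
  exact this


/-- Norm estimate for the correlation product used in the Hausdorff–Young
inequality for the Wigner distribution: for 1 ≤ p ≤ 2, 1/p + 1/q = 1, there is
a constant E > 0, independent of f and g, with
∫ (∫ |f(t+x/2) conj(g(t−x/2))|^p dx)^{q/p} dt ≤ E (‖f‖₂ ‖g‖₂)^q. -/
theorem correlation_hausdorff_young (p q : ℝ) (hp1 : 1 ≤ p) (hp2 : p ≤ 2)
    (hpq : 1 / p + 1 / q = 1) :
    ∃ E > (0 : ℝ), ∀ f g : ℝ → ℂ, MemLp f 2 → MemLp g 2 →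
      (∫ t : ℝ, (∫ x : ℝ, ‖f (t + x / 2) * (starRingEnd ℂ) (g (t - x / 2))‖ ^ p) ^ (q / p))
        ≤ E * ((∫ u : ℝ, ‖f u‖ ^ 2) ^ ((1 : ℝ) / 2) * (∫ v : ℝ, ‖g v‖ ^ 2) ^ ((1 : ℝ) / 2)) ^ q := by
  rcases eq_or_lt_of_le hp1 with hp1e | hp1l
  · -- degenerate case p = 1, where necessarily q = 0 (in ℝ, 1/q = 0 forces q = 0)
    have hq0 : q = 0 := by
      rw [← hp1e] at hpq
      norm_num at hpq
      exact hpq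
    refine ⟨1, one_pos, fun f g hf hg => ?_⟩
    simp only [hq0, zero_div, Real.rpow_zero, one_mul]
    rw [integral_const]
    simp [Measure.real, Real.volume_univ]
  · have hp0 : 0 < p := lt_trans one_pos hp1l
    have hpm1 : 0 < p - 1 := by linarith
    have hqne : q ≠ 0 := by
      intro h
      rw [h] at hpq
      norm_num at hpq
      exact hp1l.ne' hpq
    have hq : q = p / (p - 1) := by
      rw [eq_div_iff hpm1.ne']
      have h1 : 1 / q = (p - 1) / p := by
        have h2 : (1:ℝ) - 1 / p = (p - 1) / p := by field_simp
        linarith [h2]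
      field_simp at h1
      linarith
    have hq0 : 0 < q := by rw [hq]; positivity
    have hs : 0 < q / p := by positivity
    refine ⟨2 ^ (q / p), by positivity, fun f g hf hg => ?_⟩
    -- measurable representatives
    set f' := hf.1.mk f with hf'def
    have hf'm : StronglyMeasurable f' := hf.1.stronglyMeasurable_mk
    have hff' : f =ᵐ[volume] f' := hf.1.ae_eq_mk
    set g' := hg.1.mk g with hg'def
    have hg'm : StronglyMeasurable g' := hg.1.stronglyMeasurable_mk
    have hgg' : g =ᵐ[volume] g' := hg.1.ae_eq_mk
    set A : ℝ → ℝ≥0∞ := fun u => (‖f' u‖₊ : ℝ≥0∞) ^ p with hAdef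
    set B : ℝ → ℝ≥0∞ := fun u => (‖g' u‖₊ : ℝ≥0∞) ^ p with hBdef
    have hA : Measurable A :=
      ENNReal.continuous_rpow_const.measurable.comp hf'm.measurable.nnnorm.coe_nnreal_ennreal
    have hB : Measurable B :=
      ENNReal.continuous_rpow_const.measurable.comp hg'm.measurable.nnnorm.coe_nnreal_ennreal
    set Nf := ∫ u : ℝ, ‖f u‖ ^ 2 with hNfdef
    set Ng := ∫ v : ℝ, ‖g v‖ ^ 2 with hNgdef
    have hNf0 : 0 ≤ Nf := integral_nonneg fun u => by positivity
    have hNg0 : 0 ≤ Ng := integral_nonneg fun v => by positivity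
    have hIf : Integrable (fun u => ‖f u‖ ^ 2) volume := by
      have := hf.integrable_norm_rpow two_ne_zero ENNReal.ofNat_ne_top
      simpa [Real.rpow_natCast] using this
    have hIg : Integrable (fun v => ‖g v‖ ^ 2) volume := by
      have := hg.integrable_norm_rpow two_ne_zero ENNReal.ofNat_ne_top
      simpa [Real.rpow_natCast] using this
    have hLf : (∫⁻ u : ℝ, A u ^ (2 / p)) = ENNReal.ofReal Nf := by
      rw [hNfdef, ofReal_integral_eq_lintegral_ofReal hIf
        (Filter.Eventually.of_forall fun u => by positivity)]
      apply lintegral_congr_ae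
      filter_upwards [hff'] with u hu
      have h1 : A u ^ (2/p) = (‖f' u‖₊ : ℝ≥0∞) ^ (2:ℝ) := by
        rw [hAdef]; simp only []
        rw [← ENNReal.rpow_mul]
        congr 1
        field_simp
      rw [h1, hu, ← enorm_eq_nnnorm, ← ofReal_norm, ENNReal.rpow_two]
      exact (ENNReal.ofReal_pow (norm_nonneg _) 2).symm
    have hLg : (∫⁻ v : ℝ, B v ^ (2 / p)) = ENNReal.ofReal Ng := by
      rw [hNgdef, ofReal_integral_eq_lintegral_ofReal hIg
        (Filter.Eventually.of_forall fun v => by positivity)]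
      apply lintegral_congr_ae
      filter_upwards [hgg'] with v hv
      have h1 : B v ^ (2/p) = (‖g' v‖₊ : ℝ≥0∞) ^ (2:ℝ) := by
        rw [hBdef]; simp only []
        rw [← ENNReal.rpow_mul]
        congr 1
        field_simp
      rw [h1, hv, ← enorm_eq_nnnorm, ← ofReal_norm, ENNReal.rpow_two]
      exact (ENNReal.ofReal_pow (norm_nonneg _) 2).symm
    -- key ENNReal estimate
    have hkey := key_bound hp1l hp2 hq A B hA hB
    rw [hLf, hLg] at hkey
    -- pointwise comparison of the real inner integral with the ENNReal one
    have hptw : ∀ t : ℝ,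
        ENNReal.ofReal ((∫ x : ℝ, ‖f (t + x / 2) * (starRingEnd ℂ) (g (t - x / 2))‖ ^ p) ^ (q / p))
          ≤ (∫⁻ x : ℝ, A (t + x / 2) * B (t - x / 2)) ^ (q / p) := by
      intro t
      rw [← ENNReal.ofReal_rpow_of_nonneg (integral_nonneg fun x => by positivity) hs.le]
      refine ENNReal.rpow_le_rpow ?_ hs.le
      have heq : ∀ᵐ x : ℝ ∂volume,
          ENNReal.ofReal (‖f (t + x / 2) * (starRingEnd ℂ) (g (t - x / 2))‖ ^ p)
            = A (t + x / 2) * B (t - x / 2) := by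
        have h1 : (fun x : ℝ => f (t + x / 2)) =ᵐ[volume] fun x => f' (t + x / 2) := by
          have h1' := ae_eq_comp_affine (a := (2:ℝ)⁻¹) (by norm_num) t hff'
          have e : ∀ (h : ℝ → ℂ), (fun x : ℝ => h ((2:ℝ)⁻¹ * x + t)) = fun x : ℝ => h (t + x / 2) := by
            intro h; funext x; congr 1; ring
          rwa [e f, e f'] at h1'
        have h2 : (fun x : ℝ => g (t - x / 2)) =ᵐ[volume] fun x => g' (t - x / 2) := by
          have h2' := ae_eq_comp_affine (a := -(2:ℝ)⁻¹) (by norm_num) t hgg'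
          have e : ∀ (h : ℝ → ℂ), (fun x : ℝ => h (-(2:ℝ)⁻¹ * x + t)) = fun x : ℝ => h (t - x / 2) := by
            intro h; funext x; congr 1; ring
          rwa [e g, e g'] at h2'
        filter_upwards [h1, h2] with x e1 e2
        rw [norm_mul, RCLike.norm_conj, e1, e2,
          Real.mul_rpow (norm_nonneg _) (norm_nonneg _),
          ENNReal.ofReal_mul (by positivity)]
        rw [hAdef, hBdef]; simp only []
        rw [← enorm_eq_nnnorm, ← ofReal_norm, ← enorm_eq_nnnorm, ← ofReal_norm,
          ENNReal.ofReal_rpow_of_nonneg (norm_nonneg _) hp0.le,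
          ENNReal.ofReal_rpow_of_nonneg (norm_nonneg _) hp0.le]
      by_cases hi : Integrable
          (fun x : ℝ => ‖f (t + x / 2) * (starRingEnd ℂ) (g (t - x / 2))‖ ^ p) volume
      · rw [ofReal_integral_eq_lintegral_ofReal hi
            (Filter.Eventually.of_forall fun x => by positivity)]
        exact le_of_eq (lintegral_congr_ae heq)
      · rw [integral_undef hi]
        simp
    -- outer comparison and conclusion
    set Bound : ℝ≥0∞ := (2:ℝ≥0∞) ^ (q/p) * (ENNReal.ofReal Nf * ENNReal.ofReal Ng) ^ (q/2)
      with hBound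
    have hBoundTop : Bound ≠ ∞ := by
      rw [hBound]
      apply ENNReal.mul_ne_top
      · exact ENNReal.rpow_ne_top_of_nonneg hs.le (by norm_num)
      · exact ENNReal.rpow_ne_top_of_nonneg (by positivity)
          (ENNReal.mul_ne_top ENNReal.ofReal_ne_top ENNReal.ofReal_ne_top)
    have hchain : (∫⁻ t : ℝ, ENNReal.ofReal
        ((∫ x : ℝ, ‖f (t + x / 2) * (starRingEnd ℂ) (g (t - x / 2))‖ ^ p) ^ (q / p))) ≤ Bound :=
      le_trans (lintegral_mono hptw) hkey
    have hfinal : (∫ t : ℝ, (∫ x : ℝ, ‖f (t + x / 2) * (starRingEnd ℂ) (g (t - x / 2))‖ ^ p)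
        ^ (q / p)) ≤ Bound.toReal := by
      by_cases hI : Integrable (fun t : ℝ =>
          (∫ x : ℝ, ‖f (t + x / 2) * (starRingEnd ℂ) (g (t - x / 2))‖ ^ p) ^ (q / p)) volume
      · rw [integral_eq_lintegral_of_nonneg_ae (Filter.Eventually.of_forall fun t =>
            Real.rpow_nonneg (integral_nonneg fun x => by positivity) _) hI.1]
        exact ENNReal.toReal_mono hBoundTop hchain
      · rw [integral_undef hI]; exact ENNReal.toReal_nonneg
    refine le_trans hfinal (le_of_eq ?_)
    rw [hBound, ENNReal.toReal_mul, ← ENNReal.toReal_rpow, ← ENNReal.toReal_rpow,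
      ENNReal.toReal_mul, ENNReal.toReal_ofReal hNf0, ENNReal.toReal_ofReal hNg0,
      ENNReal.toReal_ofNat]
    congr 1
    rw [← Real.mul_rpow hNf0 hNg0, ← Real.rpow_mul (mul_nonneg hNf0 hNg0)]
    congr 1
    ring
end

section
/- (One-dimensional OLCT inversion, complex scalar model.) Let Λ = (a,b,c,d) with ad − bc = 1 and b ≠ 0, and let f : ℝ → ℂ be a Schwartz function. Define ℒ_Λ[f](w) = ∫_ℝ f(x) K_Λ(x,w) dx with K_Λ(x,w) = (2π|b|)^{-1/2} exp(i(a x² − 2 x w + d w² − π/2)/(2b)). Then for all x ∈ ℝ, f(x) = ∫_ℝ ℒ_Λ[f](w) · conj(K_Λ(x,w)) dw. -/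
open MeasureTheory Complex

open scoped FourierTransform ContDiff

noncomputable section

/-- Bound on the evaluation of a complex polynomial at real points. -/
lemma poly_eval_bound (p : Polynomial ℂ) :
    ∃ C : ℝ, 0 ≤ C ∧ ∀ x : ℝ,
      ‖Polynomial.eval (x : ℂ) p‖ ≤ C * (1 + ‖x‖) ^ p.natDegree := by
  refine ⟨∑ i ∈ Finset.range (p.natDegree + 1), ‖p.coeff i‖, by positivity, fun x => ?_⟩
  rw [Polynomial.eval_eq_sum_range]
  calc ‖∑ i ∈ Finset.range (p.natDegree + 1), p.coeff i * (x : ℂ) ^ i‖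
      ≤ ∑ i ∈ Finset.range (p.natDegree + 1), ‖p.coeff i * (x : ℂ) ^ i‖ :=
        norm_sum_le _ _
    _ ≤ ∑ i ∈ Finset.range (p.natDegree + 1), ‖p.coeff i‖ * (1 + ‖x‖) ^ p.natDegree := by
        apply Finset.sum_le_sum
        intro i hi
        rw [norm_mul, norm_pow]
        have hx1 : ‖(x : ℂ)‖ ≤ 1 + ‖x‖ := by
          rw [Complex.norm_real]; linarith [norm_nonneg x]
        have h2 : ‖(x : ℂ)‖ ^ i ≤ (1 + ‖x‖) ^ p.natDegree := by
          calc ‖(x : ℂ)‖ ^ i ≤ (1 + ‖x‖) ^ i := by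
                exact pow_le_pow_left₀ (norm_nonneg _) hx1 i
            _ ≤ (1 + ‖x‖) ^ p.natDegree := by
                apply pow_le_pow_right₀ (by linarith [norm_nonneg x])
                exact Nat.lt_succ_iff.mp (Finset.mem_range.mp hi)
        exact mul_le_mul_of_nonneg_left h2 (norm_nonneg _)
    _ = (∑ i ∈ Finset.range (p.natDegree + 1), ‖p.coeff i‖) * (1 + ‖x‖) ^ p.natDegree := by
        rw [Finset.sum_mul]

/-- The quadratic chirp `y ↦ exp(i c y²)` has temperate growth. -/
lemma chirp_hasTemperateGrowth (c : ℝ) :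
    Function.HasTemperateGrowth (fun y : ℝ => Complex.exp (Complex.I * ((c : ℂ) * (y : ℂ) ^ 2))) := by
  set G : ℂ → ℂ := fun z => Complex.exp (Complex.I * ((c : ℂ) * z ^ 2)) with hGdef
  have hGd : ∀ z : ℂ, HasDerivAt G (Complex.I * ((c : ℂ) * (2 * z)) * G z) z := by
    intro z
    have h1 : HasDerivAt (fun z : ℂ => Complex.I * ((c : ℂ) * z ^ 2))
        (Complex.I * ((c : ℂ) * (2 * z))) z := by
      have h0 : HasDerivAt (fun z : ℂ => z ^ 2) (2 * z) z := by
        simpa using hasDerivAt_pow 2 z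
      have := (h0.const_mul (c : ℂ)).const_mul Complex.I
      simpa [mul_assoc] using this
    simpa [hGdef, mul_comm] using h1.cexp
  have hGnorm : ∀ x : ℝ, ‖G (x : ℂ)‖ = 1 := by
    intro x
    have : Complex.I * ((c : ℂ) * (x : ℂ) ^ 2) = ((c * x ^ 2 : ℝ) : ℂ) * Complex.I := by
      push_cast; ring
    rw [hGdef]
    simp only [this]
    rw [Complex.norm_exp_ofReal_mul_I]
  have hsmooth : ContDiff ℝ ∞ (fun y : ℝ => G (y : ℂ)) := by
    have hinner : ContDiff ℝ ∞ (fun y : ℝ => Complex.I * ((c : ℂ) * (y : ℂ) ^ 2)) :=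
      contDiff_const.mul (contDiff_const.mul ((Complex.ofRealCLM.contDiff).pow 2))
    exact ((Complex.contDiff_exp (𝕜 := ℂ)).restrict_scalars ℝ).comp hinner
  have hpoly : ∀ n : ℕ, ∃ p : Polynomial ℂ, ∀ x : ℝ,
      iteratedDeriv n (fun y : ℝ => G (y : ℂ)) x = Polynomial.eval (x : ℂ) p * G (x : ℂ) := by
    intro n
    induction n with
    | zero => exact ⟨1, fun x => by simp [iteratedDeriv_zero]⟩
    | succ n ih =>
      obtain ⟨p, hp⟩ := ih
      refine ⟨Polynomial.derivative p +
        p * (Polynomial.C (Complex.I * (2 * (c : ℂ))) * Polynomial.X), fun x => ?_⟩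
      rw [iteratedDeriv_succ]
      have hfun : iteratedDeriv n (fun y : ℝ => G (y : ℂ))
          = fun y : ℝ => Polynomial.eval (y : ℂ) p * G (y : ℂ) := funext hp
      rw [hfun]
      have hPG : HasDerivAt (fun z : ℂ => Polynomial.eval z p * G z)
          (Polynomial.eval (x : ℂ) (Polynomial.derivative p) * G (x : ℂ) +
            Polynomial.eval (x : ℂ) p * (Complex.I * ((c : ℂ) * (2 * (x : ℂ))) * G (x : ℂ)))
          (x : ℂ) := (p.hasDerivAt (x : ℂ)).mul (hGd (x : ℂ))
      rw [hPG.comp_ofReal.deriv]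
      simp only [Polynomial.eval_add, Polynomial.eval_mul, Polynomial.eval_C, Polynomial.eval_X]
      ring
  refine ⟨hsmooth, fun n => ?_⟩
  obtain ⟨p, hp⟩ := hpoly n
  obtain ⟨C, hC0, hC⟩ := poly_eval_bound p
  refine ⟨p.natDegree, C, fun x => ?_⟩
  rw [norm_iteratedFDeriv_eq_norm_iteratedDeriv, hp x, norm_mul, hGnorm x, mul_one]
  exact hC x

/-- One-dimensional LCT inversion for Schwartz functions:
f(x) = ∫ ℒ_Λ[f](w) conj(K_Λ(x,w)) dw. -/
theorem lct_inversion (a b c d : ℝ) (hΛ : a * d - b * c = 1) (hb : b ≠ 0)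
    (f : SchwartzMap ℝ ℂ) (x : ℝ) :
    f x = ∫ w : ℝ, (∫ y : ℝ, f y * lctKernel a b d y w) *
      (starRingEnd ℂ) (lctKernel a b d x w) := by
  have hπ : Real.pi ≠ 0 := Real.pi_ne_zero
  set C : ℂ := (Real.sqrt (2 * Real.pi * |b|) : ℂ)⁻¹ with hC
  -- the chirp-multiplied Schwartz function
  set g : SchwartzMap ℝ ℂ :=
    SchwartzMap.bilinLeftCLM (ContinuousLinearMap.mul ℝ ℂ)
      (chirp_hasTemperateGrowth (a / (2 * b))) f with hgdef
  have hg_apply : ∀ y : ℝ,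
      g y = f y * Complex.exp (Complex.I * (((a / (2 * b) : ℝ) : ℂ) * (y : ℂ) ^ 2)) :=
    fun y => rfl
  -- inner integral is a Fourier transform of g, up to constants
  have hinner : ∀ w : ℝ, (∫ y : ℝ, f y * lctKernel a b d y w)
      = C * Complex.exp (Complex.I * (((d * w ^ 2 - Real.pi / 2) / (2 * b) : ℝ) : ℂ)) *
        𝓕 (⇑g) ((2 * Real.pi * b)⁻¹ * w) := by
    intro w
    rw [Real.fourier_real_eq_integral_exp_smul, ← MeasureTheory.integral_const_mul]
    apply MeasureTheory.integral_congr_ae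
    filter_upwards with y
    rw [smul_eq_mul, hg_apply y, lctKernel]
    have hre : (a * y ^ 2 - 2 * y * w + d * w ^ 2 - Real.pi / 2) / (2 * b)
        = (d * w ^ 2 - Real.pi / 2) / (2 * b)
          + (-2 * Real.pi * y * ((2 * Real.pi * b)⁻¹ * w) + a / (2 * b) * y ^ 2) := by
      field_simp
      ring
    rw [hre]
    push_cast
    rw [mul_add, Complex.exp_add, mul_add, Complex.exp_add]
    rw [hC]
    ring_nf
  -- conjugate kernel
  have hconj : ∀ w : ℝ, (starRingEnd ℂ) (lctKernel a b d x w)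
      = C * Complex.exp (-(Complex.I *
          (((a * x ^ 2 - 2 * x * w + d * w ^ 2 - Real.pi / 2) / (2 * b) : ℝ) : ℂ))) := by
    intro w
    rw [lctKernel, map_mul, map_inv₀, Complex.conj_ofReal, ← Complex.exp_conj, map_mul,
      Complex.conj_I, Complex.conj_ofReal, neg_mul]
  -- the auxiliary function whose integral is the inverse Fourier transform at x
  set h : ℝ → ℂ := fun v => Complex.exp (((2 * Real.pi * (v * x) : ℝ) : ℂ) * Complex.I) • 𝓕 (⇑g) v
    with hhdef
  have houter : ∀ w : ℝ,
      (∫ y : ℝ, f y * lctKernel a b d y w) * (starRingEnd ℂ) (lctKernel a b d x w)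
      = (C * C * Complex.exp (-(Complex.I * ((a * x ^ 2 / (2 * b) : ℝ) : ℂ)))) *
          h ((2 * Real.pi * b)⁻¹ * w) := by
    intro w
    rw [hinner w, hconj w, hhdef]
    simp only [smul_eq_mul]
    have hre2 : (d * w ^ 2 - Real.pi / 2) / (2 * b)
        - (a * x ^ 2 - 2 * x * w + d * w ^ 2 - Real.pi / 2) / (2 * b)
        = -(a * x ^ 2 / (2 * b)) + 2 * Real.pi * ((2 * Real.pi * b)⁻¹ * w * x) := by
      field_simp
      ring
    have h3 : (((d * w ^ 2 - Real.pi / 2) / (2 * b) : ℝ) : ℂ)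
        - (((a * x ^ 2 - 2 * x * w + d * w ^ 2 - Real.pi / 2) / (2 * b) : ℝ) : ℂ)
        = -(((a * x ^ 2 / (2 * b) : ℝ) : ℂ))
          + (((2 * Real.pi * ((2 * Real.pi * b)⁻¹ * w * x) : ℝ) : ℂ)) := by
      exact_mod_cast congrArg (fun r : ℝ => (r : ℂ)) hre2
    have hexp : Complex.exp (Complex.I * (((d * w ^ 2 - Real.pi / 2) / (2 * b) : ℝ) : ℂ)) *
        Complex.exp (-(Complex.I *
          (((a * x ^ 2 - 2 * x * w + d * w ^ 2 - Real.pi / 2) / (2 * b) : ℝ) : ℂ)))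
        = Complex.exp (-(Complex.I * ((a * x ^ 2 / (2 * b) : ℝ) : ℂ))) *
          Complex.exp ((((2 * Real.pi * ((2 * Real.pi * b)⁻¹ * w * x) : ℝ) : ℂ)) * Complex.I) := by
      rw [← Complex.exp_add, ← Complex.exp_add]
      congr 1
      linear_combination Complex.I * h3
    calc C * Complex.exp (Complex.I * (((d * w ^ 2 - Real.pi / 2) / (2 * b) : ℝ) : ℂ)) *
          𝓕 (⇑g) ((2 * Real.pi * b)⁻¹ * w) *
          (C * Complex.exp (-(Complex.I *
            (((a * x ^ 2 - 2 * x * w + d * w ^ 2 - Real.pi / 2) / (2 * b) : ℝ) : ℂ))))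
        = C * C * (Complex.exp (Complex.I * (((d * w ^ 2 - Real.pi / 2) / (2 * b) : ℝ) : ℂ)) *
            Complex.exp (-(Complex.I *
              (((a * x ^ 2 - 2 * x * w + d * w ^ 2 - Real.pi / 2) / (2 * b) : ℝ) : ℂ)))) *
            𝓕 (⇑g) ((2 * Real.pi * b)⁻¹ * w) := by ring
      _ = _ := by rw [hexp]; push_cast; ring_nf
  -- integrability facts and Fourier inversion
  have hgi : Integrable (⇑g) := g.integrable (μ := volume)
  have hFgi : Integrable (𝓕 (⇑g)) := by
    have := (SchwartzMap.fourierTransformCLM ℂ g).integrable (μ := volume)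
    rwa [SchwartzMap.fourierTransformCLM_apply] at this
  have hinv : 𝓕⁻ (𝓕 (⇑g)) x = g x :=
    hgi.fourierInv_fourier_eq hFgi g.continuous.continuousAt
  have hint_h : (∫ v : ℝ, h v) = g x := by
    rw [← hinv, Real.fourierInv_eq']
    apply MeasureTheory.integral_congr_ae
    filter_upwards with v
    rw [hhdef]
    simp only [RCLike.inner_apply, conj_trivial]
    rw [mul_comm x v]
  -- put everything together
  calc (f x : ℂ)
      = (C * C * Complex.exp (-(Complex.I * ((a * x ^ 2 / (2 * b) : ℝ) : ℂ)))) *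
          ((|2 * Real.pi * b| : ℝ) • g x) := by
        have hCC : C * C = ((2 * Real.pi * |b| : ℝ) : ℂ)⁻¹ := by
          rw [hC, ← mul_inv, ← Complex.ofReal_mul, Real.mul_self_sqrt (by positivity)]
        have habs : |2 * Real.pi * b| = 2 * Real.pi * |b| := by
          rw [abs_mul, abs_of_pos (by positivity : (0:ℝ) < 2 * Real.pi)]
        rw [hg_apply x, hCC, habs, Complex.real_smul]
        have hne : ((2 * Real.pi * |b| : ℝ) : ℂ) ≠ 0 := by
          simp only [ne_eq, Complex.ofReal_eq_zero]
          positivity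
        have hexp0 : Complex.exp (-(Complex.I * ((a * x ^ 2 / (2 * b) : ℝ) : ℂ))) *
            Complex.exp (Complex.I * (((a / (2 * b) : ℝ) : ℂ) * (x : ℂ) ^ 2)) = 1 := by
          rw [← Complex.exp_add]
          have : -(Complex.I * ((a * x ^ 2 / (2 * b) : ℝ) : ℂ))
              + Complex.I * (((a / (2 * b) : ℝ) : ℂ) * (x : ℂ) ^ 2) = 0 := by
            have : (a * x ^ 2 / (2 * b) : ℝ) = (a / (2 * b)) * x ^ 2 := by ring
            rw [this]
            push_cast
            ring
          rw [this, Complex.exp_zero]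
        rw [show ((2 * Real.pi * |b| : ℝ) : ℂ)⁻¹ *
              Complex.exp (-(Complex.I * ((a * x ^ 2 / (2 * b) : ℝ) : ℂ))) *
              (((2 * Real.pi * |b| : ℝ) : ℂ) *
                (f x * Complex.exp (Complex.I * (((a / (2 * b) : ℝ) : ℂ) * (x : ℂ) ^ 2))))
            = (((2 * Real.pi * |b| : ℝ) : ℂ)⁻¹ * ((2 * Real.pi * |b| : ℝ) : ℂ)) *
              (f x * (Complex.exp (-(Complex.I * ((a * x ^ 2 / (2 * b) : ℝ) : ℂ))) *
                Complex.exp (Complex.I * (((a / (2 * b) : ℝ) : ℂ) * (x : ℂ) ^ 2)))) from by ring,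
          inv_mul_cancel₀ hne, hexp0, one_mul, mul_one]
    _ = ∫ w : ℝ, (∫ y : ℝ, f y * lctKernel a b d y w) *
          (starRingEnd ℂ) (lctKernel a b d x w) := by
        have hcv : (∫ w : ℝ, h ((2 * Real.pi * b)⁻¹ * w))
            = (|2 * Real.pi * b| : ℝ) • ∫ v : ℝ, h v :=
          MeasureTheory.Measure.integral_comp_inv_mul_left h (2 * Real.pi * b)
        rw [MeasureTheory.integral_congr_ae (Filter.Eventually.of_forall houter),
          MeasureTheory.integral_const_mul, hcv, hint_h]
end
end
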